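/- Let r > 0, let q̄ ≥ 2 be real, let c₁ > 0, and let μ ∈ P_{r q̄} be a probability measure on (-∞, 0]. Let φ, ψ ∈ C_r, and suppose a ∈ ℝ^n and c ≥ 0 satisfy max(|a|, c) ≤ c₁ ∫_{(-∞,0]} |φ(u) − ψ(u)| μ(du). Then q̄ |φ(0) − ψ(0)|^{q̄−2} ( ⟨φ(0) − ψ(0), a⟩ + ((q̄ − 1)/2) c² ) ≤ q̄ ( q̄ − 1 + 2 c₁^{q̄} ) ∫_{(-∞,0]} |φ(u) − ψ(u)|^{q̄} μ̄(du), where μ̄ = ½(μ + δ₀), δ₀ is the Dirac measure at 0, and |φ(0) − ψ(0)|^{q̄−2} is interpreted as 1 when φ(0) = ψ(0) and q̄ = 2. -/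

import Mathlib

set_option maxHeartbeats 1000000


open MeasureTheory
open scoped ENNReal RealInnerProductSpace

/-- Membership in the phase space `C_r`. -/
def MemCr (n : ℕ) (r : ℝ) (φ : ℝ → EuclideanSpace ℝ (Fin n)) : Prop :=
  ContinuousOn φ (Set.Iic 0) ∧
    BddAbove ((fun u => Real.exp (r * u) * ‖φ u‖) '' Set.Iic 0)

/-- `μ^{(b)} = ∫_{(-∞,0]} e^{-b u} μ(du)`. -/
noncomputable def muExp (μ : Measure ℝ) (b : ℝ) : ℝ≥0∞ :=
  ∫⁻ u, ENNReal.ofReal (Real.exp (-b * u)) ∂μ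

/-- Let `r > 0`, `q̄ ≥ 2`, `c₁ > 0`, `μ ∈ P_{r q̄}` a probability measure on
`(-∞,0]`, and `φ, ψ ∈ C_r`.  If `a ∈ ℝ^n` and `c ≥ 0` satisfy
`max(|a|, c) ≤ c₁ ∫ |φ(u)-ψ(u)| μ(du)`, then
`q̄ |φ(0)-ψ(0)|^{q̄-2} (⟨φ(0)-ψ(0), a⟩ + ((q̄-1)/2) c²)
  ≤ q̄ (q̄-1+2c₁^{q̄}) ∫ |φ(u)-ψ(u)|^{q̄} μ̄(du)` where `μ̄ = ½(μ + δ₀)`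
(real powers, so `|φ(0)-ψ(0)|^{q̄-2} = 1` when `φ(0) = ψ(0)`, `q̄ = 2`). -/
theorem stmt_17 (n : ℕ) (r qbar c₁ : ℝ) (hr : 0 < r) (hqbar : 2 ≤ qbar) (hc₁ : 0 < c₁)
    (μ : Measure ℝ) [IsProbabilityMeasure μ] (hsupp : μ (Set.Ioi 0) = 0)
    (hfin : muExp μ (r * qbar) < ⊤)
    (φ ψ : ℝ → EuclideanSpace ℝ (Fin n)) (hφ : MemCr n r φ) (hψ : MemCr n r ψ)
    (a : EuclideanSpace ℝ (Fin n)) (c : ℝ) (hc : 0 ≤ c)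
    (hbound : max ‖a‖ c ≤ c₁ * ∫ u in Set.Iic 0, ‖φ u - ψ u‖ ∂μ) :
    qbar * ‖φ 0 - ψ 0‖ ^ (qbar - 2) * (⟪φ 0 - ψ 0, a⟫ + ((qbar - 1) / 2) * c ^ 2) ≤
      qbar * (qbar - 1 + 2 * c₁ ^ qbar) *
        ∫ u in Set.Iic 0, ‖φ u - ψ u‖ ^ qbar
          ∂(((1 : ℝ≥0∞) / 2) • (μ + Measure.dirac 0)) := by
  have hq0 : (0 : ℝ) < qbar := by linarith
  have hqne : qbar ≠ 0 := ne_of_gt hq0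
  set ν : Measure ℝ := μ.restrict (Set.Iic 0) with hν
  -- ν is a probability measure
  have hνuniv : ν Set.univ = 1 := by
    rw [hν, Measure.restrict_apply MeasurableSet.univ, Set.univ_inter, ← Set.compl_Ioi,
      measure_compl measurableSet_Ioi (measure_ne_top μ _), hsupp, measure_univ]
    simp
  have hνprob : IsProbabilityMeasure ν := ⟨hνuniv⟩
  -- continuity of the difference
  have hcont : ContinuousOn (fun u => ‖φ u - ψ u‖) (Set.Iic 0) := (hφ.1.sub hψ.1).norm
  have hmf : AEStronglyMeasurable (fun u => ‖φ u - ψ u‖) ν :=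
    hcont.aestronglyMeasurable measurableSet_Iic
  have hcontq : ContinuousOn (fun u => ‖φ u - ψ u‖ ^ qbar) (Set.Iic 0) :=
    hcont.rpow_const fun u _ => Or.inr hq0.le
  have hmfq : AEStronglyMeasurable (fun u => ‖φ u - ψ u‖ ^ qbar) ν :=
    hcontq.aestronglyMeasurable measurableSet_Iic
  -- exponential bounds
  obtain ⟨Cφ, hCφ⟩ := hφ.2
  obtain ⟨Cψ, hCψ⟩ := hψ.2
  have hbφ : ∀ u ∈ Set.Iic 0, ‖φ u‖ ≤ Cφ * Real.exp (-r * u) := by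
    intro u hu
    have h1 : Real.exp (r * u) * ‖φ u‖ ≤ Cφ := hCφ ⟨u, hu, rfl⟩
    have h2 : (0 : ℝ) < Real.exp (r * u) := Real.exp_pos _
    rw [neg_mul, Real.exp_neg]
    nlinarith [mul_le_mul_of_nonneg_right h1 (inv_nonneg.mpr h2.le),
      mul_inv_cancel₀ (ne_of_gt h2), norm_nonneg (φ u)]
  have hbψ : ∀ u ∈ Set.Iic 0, ‖ψ u‖ ≤ Cψ * Real.exp (-r * u) := by
    intro u hu
    have h1 : Real.exp (r * u) * ‖ψ u‖ ≤ Cψ := hCψ ⟨u, hu, rfl⟩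
    have h2 : (0 : ℝ) < Real.exp (r * u) := Real.exp_pos _
    rw [neg_mul, Real.exp_neg]
    nlinarith [mul_le_mul_of_nonneg_right h1 (inv_nonneg.mpr h2.le),
      mul_inv_cancel₀ (ne_of_gt h2), norm_nonneg (ψ u)]
  set C : ℝ := Cφ + Cψ with hC
  have hC0 : 0 ≤ C := by
    have h1 := hCφ ⟨0, Set.self_mem_Iic, rfl⟩
    have h2 := hCψ ⟨0, Set.self_mem_Iic, rfl⟩
    simp only [mul_zero, Real.exp_zero, one_mul] at h1 h2
    have := norm_nonneg (φ 0); have := norm_nonneg (ψ 0)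
    simp only [hC]; linarith
  have hbf : ∀ u ∈ Set.Iic 0, ‖φ u - ψ u‖ ≤ C * Real.exp (-r * u) := by
    intro u hu
    calc ‖φ u - ψ u‖ ≤ ‖φ u‖ + ‖ψ u‖ := norm_sub_le _ _
      _ ≤ Cφ * Real.exp (-r * u) + Cψ * Real.exp (-r * u) :=
          add_le_add (hbφ u hu) (hbψ u hu)
      _ = C * Real.exp (-r * u) := by rw [hC]; ring
  have hexp_le : ∀ u ∈ Set.Iic 0, Real.exp (-r * u) ≤ Real.exp (-(r * qbar) * u) := by
    intro u hu
    apply Real.exp_le_exp.mpr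
    have hu' : u ≤ 0 := hu
    nlinarith [mul_nonneg (mul_nonneg hr.le (neg_nonneg.mpr hu'))
      (by linarith : (0:ℝ) ≤ qbar - 1)]
  -- integrability of the dominating exponential
  have hexp_int : Integrable (fun u => Real.exp (-(r * qbar) * u)) ν := by
    refine ⟨(Real.continuous_exp.comp (continuous_const.mul continuous_id)).aestronglyMeasurable,
      ?_⟩
    rw [hasFiniteIntegral_iff_norm]
    refine lt_of_le_of_lt ?_ hfin
    rw [muExp]
    refine le_trans (lintegral_mono fun u => ?_) (lintegral_mono' Measure.restrict_le_self le_rfl)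
    rw [Real.norm_eq_abs, abs_of_nonneg (Real.exp_pos _).le]
  -- integrability of the difference
  have hint_f : Integrable (fun u => ‖φ u - ψ u‖) ν := by
    refine Integrable.mono (hexp_int.const_mul C) hmf ?_
    filter_upwards [ae_restrict_mem measurableSet_Iic] with u hu
    rw [Real.norm_eq_abs, abs_of_nonneg (norm_nonneg _), Real.norm_eq_abs]
    refine le_trans (le_trans (hbf u hu) ?_) (le_abs_self _)
    exact mul_le_mul_of_nonneg_left (hexp_le u hu) hC0
  -- integrability of the qbar-power
  have hint_fq : Integrable (fun u => ‖φ u - ψ u‖ ^ qbar) ν := by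
    refine Integrable.mono (hexp_int.const_mul (C ^ qbar)) hmfq ?_
    filter_upwards [ae_restrict_mem measurableSet_Iic] with u hu
    rw [Real.norm_eq_abs, abs_of_nonneg (Real.rpow_nonneg (norm_nonneg _) _), Real.norm_eq_abs]
    refine le_trans ?_ (le_abs_self _)
    calc ‖φ u - ψ u‖ ^ qbar ≤ (C * Real.exp (-r * u)) ^ qbar :=
          Real.rpow_le_rpow (norm_nonneg _) (hbf u hu) hq0.le
      _ = C ^ qbar * Real.exp (-r * u) ^ qbar :=
          Real.mul_rpow hC0 (Real.exp_pos _).le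
      _ = C ^ qbar * Real.exp (-(r * qbar) * u) := by
          rw [← Real.exp_mul]; ring_nf
  -- abbreviations
  set I : ℝ := ∫ u in Set.Iic 0, ‖φ u - ψ u‖ ∂μ with hI
  set J : ℝ := ∫ u in Set.Iic 0, ‖φ u - ψ u‖ ^ qbar ∂μ with hJ
  set X : ℝ := ‖φ 0 - ψ 0‖ with hX
  set M : ℝ := c₁ * I with hM
  have hI0 : 0 ≤ I := integral_nonneg fun u => norm_nonneg _
  have hJ0 : 0 ≤ J := integral_nonneg fun u => Real.rpow_nonneg (norm_nonneg _) _
  have hX0 : 0 ≤ X := norm_nonneg _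
  have hM0 : 0 ≤ M := le_trans (le_trans hc (le_max_right ‖a‖ c)) hbound
  have hA0 : 0 ≤ X ^ qbar := Real.rpow_nonneg hX0 _
  have hXq2 : 0 ≤ X ^ (qbar - 2) := Real.rpow_nonneg hX0 _
  -- Jensen: I ^ qbar ≤ J
  have hJensen : I ^ qbar ≤ J := by
    have hconv : ConvexOn ℝ (Set.Ici 0) fun x : ℝ => x ^ qbar :=
      convexOn_rpow (by linarith)
    have hgc : ContinuousOn (fun x : ℝ => x ^ qbar) (Set.Ici 0) := by
      apply Continuous.continuousOn
      rw [continuous_iff_continuousAt]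
      exact fun x => Real.continuousAt_rpow_const x qbar (Or.inr hq0.le)
    have hfs : ∀ᵐ u ∂ν, ‖φ u - ψ u‖ ∈ Set.Ici (0 : ℝ) :=
      Filter.Eventually.of_forall fun u => norm_nonneg _
    have h := hconv.map_integral_le hgc isClosed_Ici hfs hint_f (by exact hint_fq)
    exact h
  -- the value of the RHS integral
  have hRHS : (∫ u in Set.Iic 0, ‖φ u - ψ u‖ ^ qbar
      ∂(((1 : ℝ≥0∞) / 2) • (μ + Measure.dirac 0))) = 2⁻¹ * (J + X ^ qbar) := by
    have hint_dirac : Integrable (fun u => ‖φ u - ψ u‖ ^ qbar)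
        ((Measure.dirac (0 : ℝ)).restrict (Set.Iic 0)) := by
      classical
      rw [MeasureTheory.restrict_dirac' measurableSet_Iic]
      simp only [Set.self_mem_Iic, if_true]
      exact (integrable_const (‖φ 0 - ψ 0‖ ^ qbar)).congr
        (ae_eq_dirac fun u => ‖φ u - ψ u‖ ^ qbar).symm
    have hd : (∫ u in Set.Iic 0, ‖φ u - ψ u‖ ^ qbar ∂(Measure.dirac (0 : ℝ)))
        = X ^ qbar := by
      classical
      rw [MeasureTheory.restrict_dirac' measurableSet_Iic]
      simp only [Set.self_mem_Iic, if_true]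
      rw [integral_congr_ae (ae_eq_dirac fun u => ‖φ u - ψ u‖ ^ qbar)]
      simp [hX]
    rw [Measure.restrict_smul, integral_smul_measure, Measure.restrict_add,
      integral_add_measure hint_fq hint_dirac, hd]
    rw [hν, ← hJ]
    rw [show ((1 : ℝ≥0∞) / 2).toReal = 2⁻¹ by
      simp [ENNReal.toReal_div]]
    simp [smul_eq_mul]
  rw [hRHS]
  -- basic pointwise estimates
  have hinner : ⟪φ 0 - ψ 0, a⟫ ≤ X * M := by
    refine le_trans (real_inner_le_norm _ _) ?_
    exact mul_le_mul_of_nonneg_left (le_trans (le_max_left ‖a‖ c) hbound) hX0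
  have hc2 : c ^ 2 ≤ M ^ 2 := by
    have := le_trans (le_max_right ‖a‖ c) hbound
    nlinarith
  -- X ^ (qbar - 2) * X = X ^ (qbar - 1)
  have hXX : X ^ (qbar - 2) * X = X ^ (qbar - 1) := by
    rcases eq_or_lt_of_le hX0 with h | h
    · rw [← h, Real.zero_rpow (by linarith : qbar - 1 ≠ 0), mul_zero]
    · have e : X ^ (qbar - 2) * X ^ (1 : ℝ) = X ^ (qbar - 1) := by
        rw [← Real.rpow_add h]; ring_nf
      simpa [Real.rpow_one] using e
  -- weighted AM-GM inequalities
  have amgm : ∀ w₁ w₂ : ℝ, 0 ≤ w₁ → 0 ≤ w₂ → w₁ + w₂ = 1 →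
      (X ^ qbar) ^ w₁ * (M ^ qbar) ^ w₂ ≤ w₁ * X ^ qbar + w₂ * M ^ qbar :=
    fun w₁ w₂ h₁ h₂ h₃ => Real.geom_mean_le_arith_mean2_weighted h₁ h₂ hA0
      (Real.rpow_nonneg hM0 _) h₃
  have u1 : qbar * (X ^ (qbar - 1) * M) ≤ (qbar - 1) * X ^ qbar + M ^ qbar := by
    have h := amgm ((qbar - 1) / qbar) (1 / qbar)
      (div_nonneg (by linarith) hq0.le) (by positivity) (by field_simp; ring)
    rw [← Real.rpow_mul hX0, ← Real.rpow_mul hM0] at h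
    rw [show qbar * ((qbar - 1) / qbar) = qbar - 1 by field_simp,
      show qbar * (1 / qbar) = 1 by field_simp, Real.rpow_one] at h
    have h2 := mul_le_mul_of_nonneg_left h hq0.le
    calc qbar * (X ^ (qbar - 1) * M)
        ≤ qbar * ((qbar - 1) / qbar * X ^ qbar + 1 / qbar * M ^ qbar) := h2
      _ = (qbar - 1) * X ^ qbar + M ^ qbar := by field_simp
  have u2 : qbar * (X ^ (qbar - 2) * M ^ 2) ≤ (qbar - 2) * X ^ qbar + 2 * M ^ qbar := by
    have h := amgm ((qbar - 2) / qbar) (2 / qbar)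
      (div_nonneg (by linarith) hq0.le) (by positivity) (by field_simp; ring)
    rw [← Real.rpow_mul hX0, ← Real.rpow_mul hM0] at h
    rw [show qbar * ((qbar - 2) / qbar) = qbar - 2 by field_simp,
      show qbar * (2 / qbar) = 2 by field_simp] at h
    rw [show M ^ (2 : ℝ) = M ^ (2 : ℕ) by rw [show (2:ℝ) = ((2:ℕ):ℝ) by norm_num, Real.rpow_natCast]] at h
    have h2 := mul_le_mul_of_nonneg_left h hq0.le
    calc qbar * (X ^ (qbar - 2) * M ^ 2)
        ≤ qbar * ((qbar - 2) / qbar * X ^ qbar + 2 / qbar * M ^ qbar) := h2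
      _ = (qbar - 2) * X ^ qbar + 2 * M ^ qbar := by field_simp
  -- M ^ qbar ≤ c₁ ^ qbar * J
  have u3 : M ^ qbar ≤ c₁ ^ qbar * J := by
    rw [hM, Real.mul_rpow hc₁.le hI0]
    exact mul_le_mul_of_nonneg_left hJensen (Real.rpow_nonneg hc₁.le _)
  have hK0 : 0 ≤ c₁ ^ qbar := Real.rpow_nonneg hc₁.le _
  -- combine
  have v1 : qbar * (X ^ (qbar - 2) * ⟪φ 0 - ψ 0, a⟫) ≤ qbar * (X ^ (qbar - 1) * M) := by
    have := mul_le_mul_of_nonneg_left hinner hXq2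
    have h2 : X ^ (qbar - 2) * (X * M) = X ^ (qbar - 1) * M := by
      rw [← hXX]; ring
    rw [h2] at this
    exact mul_le_mul_of_nonneg_left this hq0.le
  have v2 : qbar * (X ^ (qbar - 2) * c ^ 2) ≤ qbar * (X ^ (qbar - 2) * M ^ 2) :=
    mul_le_mul_of_nonneg_left (mul_le_mul_of_nonneg_left hc2 hXq2) hq0.le
  have w2 : (qbar - 1) / 2 * (qbar * (X ^ (qbar - 2) * c ^ 2))
      ≤ (qbar - 1) / 2 * ((qbar - 2) * X ^ qbar + 2 * M ^ qbar) :=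
    mul_le_mul_of_nonneg_left (v2.trans u2) (by linarith)
  have u3' : qbar * M ^ qbar ≤ qbar * (c₁ ^ qbar * J) :=
    mul_le_mul_of_nonneg_left u3 hq0.le
  have p1 : 0 ≤ qbar * (qbar - 1) * J := by
    have : (0:ℝ) ≤ qbar * (qbar - 1) := by nlinarith
    exact mul_nonneg this hJ0
  have p2 : 0 ≤ qbar * (c₁ ^ qbar * X ^ qbar) :=
    mul_nonneg hq0.le (mul_nonneg hK0 hA0)
  nlinarith [v1, u1, w2, u3', p1, p2]
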